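/- Let G be a directed graph with m edges, let 0 < δ ≤ 1/(20 m²), and let f ∈ R^{E(G)} be a circulation (flow conservation at every vertex) with −δ ≤ f(e) ≤ 1 for all edges e. Then every edge e with f(e) ≥ 1/(10m) lies inside a strongly connected component of G (i.e., both its endpoints are in the same SCC). -/

import Mathlib

open BigOperators

/-- Let `G` be a directed graph with `m` edges (edges `e` with source `s e` and target
`t e`), `0 < δ ≤ 1/(20 m²)`, and `f` a circulation with `−δ ≤ f(e) ≤ 1` for all `e`.
Then every edge `e₀` with `f(e₀) ≥ 1/(10 m)` lies inside a strongly connected component: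
its endpoints are mutually reachable. -/
theorem stmt_6 {V E : Type*} [Fintype V] [Fintype E] [DecidableEq V]
    (s t : E → V) (f : E → ℝ) (δ : ℝ)
    (hδpos : 0 < δ) (hδ : δ ≤ 1 / (20 * (Fintype.card E : ℝ) ^ 2))
    (hcirc : ∀ v : V, (∑ e, if t e = v then f e else 0) = ∑ e, if s e = v then f e else 0)
    (hlow : ∀ e, -δ ≤ f e) (hup : ∀ e, f e ≤ 1)
    (e₀ : E) (hf : 1 / (10 * (Fintype.card E : ℝ)) ≤ f e₀) :
    Relation.ReflTransGen (fun a b => ∃ e, s e = a ∧ t e = b) (s e₀) (t e₀) ∧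
    Relation.ReflTransGen (fun a b => ∃ e, s e = a ∧ t e = b) (t e₀) (s e₀) := by
  classical
  set r : V → V → Prop := fun a b => ∃ e, s e = a ∧ t e = b with hr
  refine ⟨Relation.ReflTransGen.single ⟨e₀, rfl, rfl⟩, ?_⟩
  by_contra hback
  set R : V → Prop := fun v => Relation.ReflTransGen r (t e₀) v with hR
  have hclosed : ∀ e, R (s e) → R (t e) := fun e h => h.tail ⟨e, rfl, rfl⟩
  set S : Finset V := Finset.univ.filter R with hS
  have hmemS : ∀ v, v ∈ S ↔ R v := by
    intro v; simp [hS]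
  have h1 : ∑ v ∈ S, (∑ e, if t e = v then f e else 0)
      = ∑ v ∈ S, ∑ e, if s e = v then f e else 0 :=
    Finset.sum_congr rfl fun v _ => hcirc v
  rw [Finset.sum_comm, Finset.sum_comm (s := S)] at h1
  have h2 : ∀ (g : E → V), ∀ e : E, (∑ v ∈ S, if g e = v then f e else 0)
      = if R (g e) then f e else 0 := by
    intro g e
    rw [Finset.sum_ite_eq]
    simp [hmemS]
  simp only [h2] at h1
  set g : E → ℝ := fun e =>
    (if R (t e) then f e else 0) - (if R (s e) then f e else 0) with hg
  have hsum0 : ∑ e, g e = 0 := by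
    simp only [hg, Finset.sum_sub_distrib, h1, sub_self]
  have hge₀ : g e₀ = f e₀ := by
    have h1 : R (t e₀) := Relation.ReflTransGen.refl
    have h2 : ¬ R (s e₀) := hback
    simp [hg, h1, h2]
  have hgub : ∀ e, -g e ≤ δ := by
    intro e
    by_cases hs : R (s e)
    · simp [hg, hs, hclosed e hs, hδpos.le]
    · by_cases ht : R (t e)
      · have := hlow e
        simp only [hg, hs, ht, if_true, if_false, sub_zero]
        linarith
      · simp [hg, hs, ht, hδpos.le]
  have hsplit : g e₀ + ∑ e ∈ Finset.univ.erase e₀, g e = ∑ e, g e :=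
    Finset.add_sum_erase _ g (Finset.mem_univ e₀)
  have hcard : (1 : ℝ) ≤ (Fintype.card E : ℝ) := by
    have : 0 < Fintype.card E := Fintype.card_pos_iff.mpr ⟨e₀⟩
    exact_mod_cast this
  have hbound : f e₀ ≤ (Fintype.card E : ℝ) * δ := by
    have h3 : f e₀ = ∑ e ∈ Finset.univ.erase e₀, (-g e) := by
      rw [Finset.sum_neg_distrib]
      linarith [hsplit, hsum0, hge₀]
    rw [h3]
    calc ∑ e ∈ Finset.univ.erase e₀, (-g e)
        ≤ ∑ _e ∈ Finset.univ.erase e₀, δ :=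
          Finset.sum_le_sum fun e _ => hgub e
      _ = (Finset.univ.erase e₀).card • δ := Finset.sum_const δ
      _ ≤ (Fintype.card E : ℝ) * δ := by
          rw [nsmul_eq_mul]
          have : ((Finset.univ.erase e₀).card : ℝ) ≤ (Fintype.card E : ℝ) := by
            exact_mod_cast Finset.card_le_card (Finset.erase_subset _ _)
          nlinarith
  set m : ℝ := (Fintype.card E : ℝ) with hm
  have hmpos : 0 < m := by linarith
  have : m * δ ≤ m * (1 / (20 * m ^ 2)) := by nlinarith
  have h4 : m * (1 / (20 * m ^ 2)) = 1 / (20 * m) := by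
    field_simp
  have h5 : 1 / (10 * m) ≤ 1 / (20 * m) := by
    calc 1 / (10 * m) ≤ f e₀ := hf
      _ ≤ m * δ := hbound
      _ ≤ _ := by rw [← h4]; exact this
  rw [div_le_div_iff₀ (by positivity) (by positivity)] at h5
  nlinarith
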